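/- Let L_e(n) = (1/n) Σ_{cd = n} μ(c)[1 + odd(c)·(3^d − 1)/2] and N_e(n) = (1/n) Σ_{cd = n} φ(c)[3^d − odd(c)·(3^d − 1)/2], where odd(c) is 1 for odd c and 0 for even c. Then N_e(n) = Σ_{d|n} L_e(d) for all positive integers n. -/

import Mathlib

open Finset ArithmeticFunction

noncomputable section EvenNecklaceAux

/-- Totient as a `ℚ`-valued arithmetic function. -/
def necT : ArithmeticFunction ℚ := ⟨fun n => (Nat.totient n : ℚ), by simp⟩

/-- Indicator of odd numbers. -/
def necO : ArithmeticFunction ℚ := ⟨fun n => if Odd n then 1 else 0, by norm_num⟩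

/-- `1` on odd, `2` on even positive numbers. -/
def necW : ArithmeticFunction ℚ :=
  ⟨fun n => if n = 0 then 0 else if Odd n then 1 else 2, by simp⟩

/-- Identity. -/
def necI : ArithmeticFunction ℚ := ⟨fun n => (n : ℚ), by simp⟩

/-- Möbius over ℚ. -/
def necM : ArithmeticFunction ℚ :=
  ((ArithmeticFunction.moebius : ArithmeticFunction ℤ) : ArithmeticFunction ℚ)

/-- ζ over ℚ. -/
def necZ : ArithmeticFunction ℚ :=
  ((ArithmeticFunction.zeta : ArithmeticFunction ℕ) : ArithmeticFunction ℚ)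

/-- `(3^n - 1)/2`. -/
def necH : ArithmeticFunction ℚ := ⟨fun n => ((3:ℚ)^n - 1)/2, by simp⟩

@[simp] lemma necT_apply (x : ℕ) : necT x = (Nat.totient x : ℚ) := rfl
@[simp] lemma necO_apply (x : ℕ) : necO x = if Odd x then 1 else 0 := rfl
@[simp] lemma necW_apply (x : ℕ) : necW x = if x = 0 then 0 else if Odd x then 1 else 2 := rfl
@[simp] lemma necI_apply (x : ℕ) : necI x = (x : ℚ) := rfl
@[simp] lemma necM_apply (x : ℕ) : necM x = ((ArithmeticFunction.moebius x : ℤ) : ℚ) := by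
  simp [necM]
@[simp] lemma necZ_apply (x : ℕ) : necZ x = if x = 0 then 0 else 1 := by
  simp [necZ, ArithmeticFunction.zeta_apply]
@[simp] lemma necH_apply (x : ℕ) : necH x = ((3:ℚ)^x - 1)/2 := rfl

lemma necT_mult : necT.IsMultiplicative := by
  refine ⟨by simp, fun {m n} h => ?_⟩
  simp [Nat.totient_mul h]

lemma necO_mult : necO.IsMultiplicative := by
  refine ⟨by simp, fun {m n} h => ?_⟩
  simp only [necO_apply, Nat.odd_mul]
  by_cases h1 : Odd m <;> by_cases h2 : Odd n <;> simp [h1, h2]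

lemma necW_mult : necW.IsMultiplicative := by
  refine ⟨by simp, fun {m n} h => ?_⟩
  rcases eq_or_ne m 0 with rfl | hm
  · simp
  rcases eq_or_ne n 0 with rfl | hn
  · simp
  simp only [necW_apply, hm, hn, Nat.mul_ne_zero hm hn, if_false, Nat.odd_mul]
  by_cases h1 : Odd m <;> by_cases h2 : Odd n
  · simp [h1, h2]
  · simp [h1, h2]
  · simp [h1, h2]
  · -- both even, contradicts coprimality
    exfalso
    rw [Nat.not_odd_iff_even] at h1 h2
    have h2' : (2:ℕ) ∣ 1 := h ▸ Nat.dvd_gcd h1.two_dvd h2.two_dvd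
    norm_num at h2'

lemma necM_mult : necM.IsMultiplicative := isMultiplicative_moebius.intCast

lemma necI_mult : necI.IsMultiplicative := by
  refine ⟨by simp, fun {m n} h => ?_⟩
  simp [Nat.cast_mul]

/-- Dirichlet convolution written over divisors. -/
lemma nec_mul_apply (f g : ArithmeticFunction ℚ) (m : ℕ) :
    (f * g) m = ∑ c ∈ m.divisors, f c * g (m / c) := by
  rw [ArithmeticFunction.mul_apply]
  exact Nat.sum_divisorsAntidiagonal (fun a b => f a * g b)

/-- `φ = μ * id` over ℚ. -/
lemma nec_F1 : necM * necI = necT := by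
  ext n
  rcases eq_or_ne n 0 with rfl | hn
  · simp
  have h1 : ∀ m : ℕ, 0 < m → ∑ d ∈ m.divisors, (Nat.totient d : ℚ) = (m : ℚ) := by
    intro m _
    rw [← Nat.cast_sum]
    exact_mod_cast congrArg (fun k : ℕ => (k : ℚ)) (Nat.sum_totient m)
  have h2 := (ArithmeticFunction.sum_eq_iff_sum_mul_moebius_eq
      (R := ℚ) (f := fun m => (Nat.totient m : ℚ)) (g := fun m => (m : ℚ))).mp
      (fun m hm => h1 m hm) n (Nat.pos_of_ne_zero hn)
  rw [ArithmeticFunction.mul_apply]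
  simpa using h2

/-- Key multiplicative identity: `(μ·odd) * id = φ · W`. -/
lemma nec_F2 : (necM.pmul necO) * necI = necT.pmul necW := by
  rw [ArithmeticFunction.IsMultiplicative.eq_iff_eq_on_prime_powers _
      ((necM_mult.pmul necO_mult).mul necI_mult) _ (necT_mult.pmul necW_mult)]
  intro p i hp
  rcases Nat.eq_zero_or_pos i with rfl | hi
  · simp [((necM_mult.pmul necO_mult).mul necI_mult).map_one,
      (necT_mult.pmul necW_mult).map_one]
  obtain ⟨j, rfl⟩ : ∃ j, i = j + 1 := ⟨i - 1, (Nat.succ_pred_eq_of_pos hi).symm⟩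
  rw [nec_mul_apply, Nat.sum_divisors_prime_pow hp]
  rw [Finset.sum_range_succ', Finset.sum_range_succ']
  have hz : ∀ k, (necM.pmul necO) (p ^ (k + 1 + 1)) = 0 := by
    intro k
    have : ArithmeticFunction.moebius (p ^ (k + 1 + 1)) = 0 := by
      rw [ArithmeticFunction.moebius_apply_prime_pow hp (by omega)]
      simp
    simp [ArithmeticFunction.pmul_apply, this]
  have hsum0 : ∑ k ∈ Finset.range j, (necM.pmul necO) (p ^ (k + 1 + 1))
      * necI (p ^ (j + 1) / p ^ (k + 1 + 1)) = 0 :=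
    Finset.sum_eq_zero fun k _ => by rw [hz k, zero_mul]
  rw [hsum0, zero_add]
  have hppos : 0 < p := hp.pos
  have hdiv1 : p ^ (j + 1) / p ^ (0 + 1) = p ^ j := by
    rw [Nat.pow_div (by omega) hppos]
    congr 1
  have hdiv0 : p ^ (j + 1) / p ^ 0 = p ^ (j + 1) := by simp
  have hmu1 : ArithmeticFunction.moebius (p ^ (0 + 1)) = -1 := by
    rw [ArithmeticFunction.moebius_apply_prime_pow hp (by omega)]
    simp
  have hodd : Odd (p ^ (j + 1)) ↔ Odd p := by
    rw [← Nat.not_even_iff_odd, ← Nat.not_even_iff_odd (n := p),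
      Nat.even_pow' (show j + 1 ≠ 0 by omega)]
  have htot : (Nat.totient (p ^ (j + 1)) : ℚ) = (p : ℚ) ^ j * ((p : ℚ) - 1) := by
    rw [Nat.totient_prime_pow hp (Nat.succ_pos j)]
    push_cast [Nat.cast_sub hp.one_lt.le]
    ring
  have hne : p ^ (j + 1) ≠ 0 := pow_ne_zero _ hp.pos.ne'
  have e1 : (necM.pmul necO) (p ^ (0 + 1)) = -(if Odd p then 1 else 0) := by
    rw [ArithmeticFunction.pmul_apply, necM_apply, necO_apply, hmu1]
    push_cast
    ring
  have e0 : (necM.pmul necO) (p ^ 0) = 1 := by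
    simp [ArithmeticFunction.pmul_apply]
  rw [hdiv0, hdiv1, e1, e0, ArithmeticFunction.pmul_apply, necT_apply, necW_apply,
    if_neg hne, necI_apply, necI_apply, htot]
  simp only [hodd]
  rcases hp.eq_two_or_odd' with rfl | hpodd
  · have h2 : ¬ Odd (2 : ℕ) := by decide
    simp only [if_neg h2]
    push_cast
    ring
  · simp only [if_pos hpodd]
    push_cast
    ring

end EvenNecklaceAux

theorem even_necklace_eq_sum_cycles (n : ℕ) (hn : 0 < n) :
    (1 / (n : ℚ)) * ∑ c ∈ n.divisors, (Nat.totient c : ℚ) *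
        (3 ^ (n / c) - (if Odd c then 1 else 0) * (3 ^ (n / c) - 1) / 2) =
      ∑ d ∈ n.divisors, (1 / (d : ℚ)) *
        ∑ c ∈ d.divisors, (ArithmeticFunction.moebius c : ℚ) *
          (1 + (if Odd c then 1 else 0) * (3 ^ (d / c) - 1) / 2) := by
  classical
  have hn' : n ≠ 0 := hn.ne'
  have hnQ : (n : ℚ) ≠ 0 := Nat.cast_ne_zero.mpr hn'
  set F : ArithmeticFunction ℚ := necM * necZ + (necM.pmul necO) * necH with hF
  have step1 : ∀ d ∈ n.divisors,
      (1 / (d : ℚ)) * ∑ c ∈ d.divisors, (ArithmeticFunction.moebius c : ℚ) *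
          (1 + (if Odd c then 1 else 0) * (3 ^ (d / c) - 1) / 2)
        = (1 / (n : ℚ)) * (((n / d : ℕ) : ℚ) * F d) := by
    intro d hd
    obtain ⟨hdvd, -⟩ := Nat.mem_divisors.mp hd
    have hd0 : d ≠ 0 := by rintro rfl; exact hn' (Nat.eq_zero_of_zero_dvd hdvd)
    have inner : ∑ c ∈ d.divisors, (ArithmeticFunction.moebius c : ℚ) *
          (1 + (if Odd c then 1 else 0) * (3 ^ (d / c) - 1) / 2) = F d := by
      rw [hF, ArithmeticFunction.add_apply, nec_mul_apply, nec_mul_apply,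
        ← Finset.sum_add_distrib]
      refine Finset.sum_congr rfl fun c hc => ?_
      obtain ⟨hcd, -⟩ := Nat.mem_divisors.mp hc
      have hcpos : 0 < c := Nat.pos_of_mem_divisors hc
      have hq : d / c ≠ 0 :=
        (Nat.div_pos (Nat.le_of_dvd (Nat.pos_of_ne_zero hd0) hcd) hcpos).ne'
      simp only [necM_apply, necZ_apply, necO_apply, necH_apply,
        ArithmeticFunction.pmul_apply, if_neg hq]
      ring
    have hcast : ((n / d : ℕ) : ℚ) = (n : ℚ) / (d : ℚ) :=
      Nat.cast_div hdvd (Nat.cast_ne_zero.mpr hd0)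
    rw [inner, hcast]
    field_simp
  rw [Finset.sum_congr rfl step1, ← Finset.mul_sum]
  congr 1
  have hFI : F * necI = necI + (necT.pmul necW) * necH := by
    have h1 : necM * necZ = (1 : ArithmeticFunction ℚ) :=
      ArithmeticFunction.coe_moebius_mul_coe_zeta
    rw [hF, add_mul, mul_right_comm (necM.pmul necO) necH necI, nec_F2, h1, one_mul]
  have expand : ∑ d ∈ n.divisors, ((n / d : ℕ) : ℚ) * F d = (F * necI) n := by
    rw [nec_mul_apply]
    exact Finset.sum_congr rfl fun d hd => by rw [necI_apply, mul_comm]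
  have final : (F * necI) n = (n : ℚ) + ∑ c ∈ n.divisors, (necT.pmul necW) c * necH (n / c) := by
    rw [hFI, ArithmeticFunction.add_apply, necI_apply, nec_mul_apply]
  have per : ∀ c ∈ n.divisors, (Nat.totient c : ℚ) *
      (3 ^ (n / c) - (if Odd c then 1 else 0) * (3 ^ (n / c) - 1) / 2)
      = (necT.pmul necW) c * necH (n / c) + (Nat.totient c : ℚ) := by
    intro c hc
    have hc0 : c ≠ 0 := (Nat.pos_of_mem_divisors hc).ne'
    simp only [ArithmeticFunction.pmul_apply, necT_apply, necW_apply, necH_apply, if_neg hc0]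
    by_cases hodd : Odd c <;> simp only [hodd, if_true, if_false] <;> ring
  have htotsum : ∑ c ∈ n.divisors, (Nat.totient c : ℚ) = (n : ℚ) := by
    rw [← Nat.cast_sum]
    exact_mod_cast congrArg (fun k : ℕ => (k : ℚ)) (Nat.sum_totient n)
  rw [Finset.sum_congr rfl per, Finset.sum_add_distrib, htotsum, expand, final]
  exact add_comm _ _
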